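/- The TCCR operator T satisfies the braid relation T₁T₂T₁ = T₂T₁T₂ on (ℂ^d)^{⊗3}. -/

import Mathlib

/-- `ampl1 d T` is the amplification `T ⊗ 1` of an operator `T` on
`ℂ^d ⊗ ℂ^d` (modelled as `EuclideanSpace ℂ (Fin d × Fin d)`) to the triple
tensor power, acting on the first two tensor factors. -/
noncomputable def ampl1 (d : ℕ)
    (T : EuclideanSpace ℂ (Fin d × Fin d) →L[ℂ] EuclideanSpace ℂ (Fin d × Fin d)) :
    EuclideanSpace ℂ (Fin d × Fin d × Fin d) →L[ℂ] EuclideanSpace ℂ (Fin d × Fin d × Fin d) :=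
  LinearMap.toContinuousLinearMap
    { toFun := fun x => WithLp.toLp 2 (fun p =>
        T (WithLp.toLp 2 (fun r => x (r.1, r.2, p.2.2) : Fin d × Fin d → ℂ)) (p.1, p.2.1)
        : Fin d × Fin d × Fin d → ℂ)
      map_add' := by
        intro x y; ext p
        have : (WithLp.toLp 2 (fun r => (x + y) (r.1, r.2, p.2.2) : Fin d × Fin d → ℂ) :
            EuclideanSpace ℂ (Fin d × Fin d)) =
            (WithLp.toLp 2 (fun r => x (r.1, r.2, p.2.2) : Fin d × Fin d → ℂ) :
            EuclideanSpace ℂ (Fin d × Fin d)) +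
            (WithLp.toLp 2 (fun r => y (r.1, r.2, p.2.2) : Fin d × Fin d → ℂ) :
            EuclideanSpace ℂ (Fin d × Fin d)) := rfl
        show T _ _ = _
        rw [this, map_add]; rfl
      map_smul' := by
        intro c x; ext p
        have : (WithLp.toLp 2 (fun r => (c • x) (r.1, r.2, p.2.2) : Fin d × Fin d → ℂ) :
            EuclideanSpace ℂ (Fin d × Fin d)) =
            c • (WithLp.toLp 2 (fun r => x (r.1, r.2, p.2.2) : Fin d × Fin d → ℂ) :
            EuclideanSpace ℂ (Fin d × Fin d)) := rfl
        show T _ _ = _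
        rw [this, map_smul]; rfl }

/-- `ampl2 d T` is the amplification `1 ⊗ T`, acting on the last two tensor
factors of the triple tensor power. -/
noncomputable def ampl2 (d : ℕ)
    (T : EuclideanSpace ℂ (Fin d × Fin d) →L[ℂ] EuclideanSpace ℂ (Fin d × Fin d)) :
    EuclideanSpace ℂ (Fin d × Fin d × Fin d) →L[ℂ] EuclideanSpace ℂ (Fin d × Fin d × Fin d) :=
  LinearMap.toContinuousLinearMap
    { toFun := fun x => WithLp.toLp 2 (fun p =>
        T (WithLp.toLp 2 (fun r => x (p.1, r.1, r.2) : Fin d × Fin d → ℂ)) (p.2.1, p.2.2)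
        : Fin d × Fin d × Fin d → ℂ)
      map_add' := by
        intro x y; ext p
        have : (WithLp.toLp 2 (fun r => (x + y) (p.1, r.1, r.2) : Fin d × Fin d → ℂ) :
            EuclideanSpace ℂ (Fin d × Fin d)) =
            (WithLp.toLp 2 (fun r => x (p.1, r.1, r.2) : Fin d × Fin d → ℂ) :
            EuclideanSpace ℂ (Fin d × Fin d)) +
            (WithLp.toLp 2 (fun r => y (p.1, r.1, r.2) : Fin d × Fin d → ℂ) :
            EuclideanSpace ℂ (Fin d × Fin d)) := rfl
        show T _ _ = _
        rw [this, map_add]; rfl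
      map_smul' := by
        intro c x; ext p
        have : (WithLp.toLp 2 (fun r => (c • x) (p.1, r.1, r.2) : Fin d × Fin d → ℂ) :
            EuclideanSpace ℂ (Fin d × Fin d)) =
            c • (WithLp.toLp 2 (fun r => x (p.1, r.1, r.2) : Fin d × Fin d → ℂ) :
            EuclideanSpace ℂ (Fin d × Fin d)) := rfl
        show T _ _ = _
        rw [this, map_smul]; rfl }

noncomputable def lift1 (d : ℕ) (k : Fin d) :
    EuclideanSpace ℂ (Fin d × Fin d) →ₗ[ℂ] EuclideanSpace ℂ (Fin d × Fin d × Fin d) where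
  toFun v := WithLp.toLp 2 (fun p => v (p.1, p.2.1) * (if p.2.2 = k then 1 else 0) : Fin d × Fin d × Fin d → ℂ)
  map_add' x y := by ext p; exact add_mul _ _ _
  map_smul' c x := by ext p; exact mul_assoc _ _ _

noncomputable def lift2 (d : ℕ) (i : Fin d) :
    EuclideanSpace ℂ (Fin d × Fin d) →ₗ[ℂ] EuclideanSpace ℂ (Fin d × Fin d × Fin d) where
  toFun v := WithLp.toLp 2 (fun p => (if p.1 = i then 1 else 0) * v (p.2.1, p.2.2) : Fin d × Fin d × Fin d → ℂ)
  map_add' x y := by ext p; exact mul_add _ _ _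
  map_smul' c x := by ext p; exact mul_left_comm _ _ _

lemma lift1_single (d : ℕ) (a b k : Fin d) :
    lift1 d k (EuclideanSpace.single (a, b) (1 : ℂ)) =
      EuclideanSpace.single (a, b, k) (1 : ℂ) := by
  ext p
  obtain ⟨x, y, z⟩ := p
  simp only [lift1, LinearMap.coe_mk, AddHom.coe_mk, EuclideanSpace.single_apply, Prod.mk.injEq]
  split_ifs <;> simp_all

lemma lift2_single (d : ℕ) (a b i : Fin d) :
    lift2 d i (EuclideanSpace.single (a, b) (1 : ℂ)) =
      EuclideanSpace.single (i, a, b) (1 : ℂ) := by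
  ext p
  obtain ⟨x, y, z⟩ := p
  simp only [lift2, LinearMap.coe_mk, AddHom.coe_mk, EuclideanSpace.single_apply, Prod.mk.injEq]
  split_ifs <;> simp_all

lemma ampl1_single (d : ℕ)
    (T : EuclideanSpace ℂ (Fin d × Fin d) →L[ℂ] EuclideanSpace ℂ (Fin d × Fin d))
    (i j k : Fin d) :
    ampl1 d T (EuclideanSpace.single (i, j, k) (1 : ℂ)) =
      lift1 d k (T (EuclideanSpace.single (i, j) (1 : ℂ))) := by
  ext p
  simp only [ampl1, LinearMap.coe_toContinuousLinearMap', LinearMap.coe_mk, AddHom.coe_mk,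
    lift1]
  have key : (WithLp.toLp 2 (fun r => EuclideanSpace.single (i, j, k) (1 : ℂ) (r.1, r.2, p.2.2) :
      Fin d × Fin d → ℂ) : EuclideanSpace ℂ (Fin d × Fin d)) =
      ((if p.2.2 = k then (1 : ℂ) else 0) • EuclideanSpace.single (i, j) (1 : ℂ) :
        EuclideanSpace ℂ (Fin d × Fin d)) := by
    ext r
    show _ = (if p.2.2 = k then (1:ℂ) else 0) * EuclideanSpace.single (i,j) (1:ℂ) r
    simp only [EuclideanSpace.single_apply, Prod.mk.injEq, Prod.ext_iff]
    obtain ⟨a, b⟩ := r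
    split_ifs <;> simp_all
  rw [key, map_smul]
  show (if p.2.2 = k then (1:ℂ) else 0) * _ = _
  exact mul_comm _ _

lemma ampl2_single (d : ℕ)
    (T : EuclideanSpace ℂ (Fin d × Fin d) →L[ℂ] EuclideanSpace ℂ (Fin d × Fin d))
    (i j k : Fin d) :
    ampl2 d T (EuclideanSpace.single (i, j, k) (1 : ℂ)) =
      lift2 d i (T (EuclideanSpace.single (j, k) (1 : ℂ))) := by
  ext p
  simp only [ampl2, LinearMap.coe_toContinuousLinearMap', LinearMap.coe_mk, AddHom.coe_mk,
    lift2]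
  have key : (WithLp.toLp 2 (fun r => EuclideanSpace.single (i, j, k) (1 : ℂ) (p.1, r.1, r.2) :
      Fin d × Fin d → ℂ) : EuclideanSpace ℂ (Fin d × Fin d)) =
      ((if p.1 = i then (1 : ℂ) else 0) • EuclideanSpace.single (j, k) (1 : ℂ) :
        EuclideanSpace ℂ (Fin d × Fin d)) := by
    ext r
    show _ = (if p.1 = i then (1:ℂ) else 0) * EuclideanSpace.single (j,k) (1:ℂ) r
    simp only [EuclideanSpace.single_apply, Prod.mk.injEq, Prod.ext_iff]
    obtain ⟨a, b⟩ := r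
    split_ifs <;> simp_all
  rw [key, map_smul]
  rfl

/-- The TCCR operator `T` satisfies the braid relation
`T₁ T₂ T₁ = T₂ T₁ T₂` on the triple tensor power `(ℂ^d)^{⊗3}`, where
`T₁ = T ⊗ 1` and `T₂ = 1 ⊗ T`. -/
theorem tccr_T_braid (d : ℕ) (hd : 1 ≤ d) (μ : ℝ) (hμ0 : 0 < μ) (hμ1 : μ < 1)
    (T : EuclideanSpace ℂ (Fin d × Fin d) →L[ℂ] EuclideanSpace ℂ (Fin d × Fin d))
    (hTd : ∀ i : Fin d,
      T (EuclideanSpace.single (i, i) (1 : ℂ)) =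
        ((μ : ℂ) ^ 2) • EuclideanSpace.single (i, i) (1 : ℂ))
    (hTlt : ∀ i j : Fin d, i < j →
      T (EuclideanSpace.single (i, j) (1 : ℂ)) =
        (μ : ℂ) • EuclideanSpace.single (j, i) (1 : ℂ))
    (hTgt : ∀ i j : Fin d, j < i →
      T (EuclideanSpace.single (i, j) (1 : ℂ)) =
        (-(1 - (μ : ℂ) ^ 2)) • EuclideanSpace.single (i, j) (1 : ℂ) +
          (μ : ℂ) • EuclideanSpace.single (j, i) (1 : ℂ)) :
    ampl1 d T ∘L ampl2 d T ∘L ampl1 d T = ampl2 d T ∘L ampl1 d T ∘L ampl2 d T := by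
  refine ContinuousLinearMap.coe_injective
    (Module.Basis.ext (PiLp.basisFun 2 ℂ (Fin d × Fin d × Fin d)) ?_)
  rintro ⟨i, j, k⟩
  have hb : (PiLp.basisFun 2 ℂ (Fin d × Fin d × Fin d)) (i, j, k) =
      EuclideanSpace.single (i, j, k) (1 : ℂ) := by
    rw [PiLp.basisFun_apply]
  simp only [hb, ContinuousLinearMap.coe_comp, LinearMap.coe_comp, Function.comp_apply,
    ContinuousLinearMap.coe_coe]
  rcases lt_trichotomy i j with hij | rfl | hij
  · rcases lt_trichotomy j k with hjk | rfl | hjk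
    · have hik : i < k := hij.trans hjk
      simp only [ampl1_single, ampl2_single, map_add, map_smul, lift1_single, lift2_single, smul_add, smul_smul, hTd, hTlt i j hij, hTgt j i hij, hTlt j k hjk, hTgt k j hjk, hTlt i k hik, hTgt k i hik]
    · -- i < j, k = j
      simp only [ampl1_single, ampl2_single, map_add, map_smul, lift1_single, lift2_single, smul_add, smul_smul, hTd, hTlt i j hij, hTgt j i hij]
      module
    · rcases lt_trichotomy i k with hik | rfl | hik
      · -- i < k < j
        simp only [ampl1_single, ampl2_single, map_add, map_smul, lift1_single, lift2_single, smul_add, smul_smul, hTd, hTlt i j hij, hTgt j i hij, hTlt k j hjk, hTgt j k hjk, hTlt i k hik, hTgt k i hik]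
        module
      · -- k = i < j
        simp only [ampl1_single, ampl2_single, map_add, map_smul, lift1_single, lift2_single, smul_add, smul_smul, hTd, hTlt i j hij, hTgt j i hij]
        module
      · -- k < i < j
        simp only [ampl1_single, ampl2_single, map_add, map_smul, lift1_single, lift2_single, smul_add, smul_smul, hTd, hTlt i j hij, hTgt j i hij, hTlt k j hjk, hTgt j k hjk, hTlt k i hik, hTgt i k hik]
        module
  · rcases lt_trichotomy i k with hik | rfl | hik
    · -- i = j < k
      simp only [ampl1_single, ampl2_single, map_add, map_smul, lift1_single, lift2_single, smul_add, smul_smul, hTd, hTlt i k hik, hTgt k i hik]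
      module
    · -- i = j = k
      simp only [ampl1_single, ampl2_single, map_add, map_smul, lift1_single, lift2_single, smul_add, smul_smul, hTd]
    · -- k < i = j
      simp only [ampl1_single, ampl2_single, map_add, map_smul, lift1_single, lift2_single, smul_add, smul_smul, hTd, hTlt k i hik, hTgt i k hik]
      module
  · rcases lt_trichotomy j k with hjk | rfl | hjk
    · rcases lt_trichotomy i k with hik | rfl | hik
      · -- j < i < k
        simp only [ampl1_single, ampl2_single, map_add, map_smul, lift1_single, lift2_single, smul_add, smul_smul, hTd, hTlt j i hij, hTgt i j hij, hTlt j k hjk, hTgt k j hjk, hTlt i k hik, hTgt k i hik]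
        module
      · -- j < i = k
        simp only [ampl1_single, ampl2_single, map_add, map_smul, lift1_single, lift2_single, smul_add, smul_smul, hTd, hTlt j i hij, hTgt i j hij]
        module
      · -- j < k < i
        simp only [ampl1_single, ampl2_single, map_add, map_smul, lift1_single, lift2_single, smul_add, smul_smul, hTd, hTlt j i hij, hTgt i j hij, hTlt j k hjk, hTgt k j hjk, hTlt k i hik, hTgt i k hik]
        module
    · -- k = j < i
      simp only [ampl1_single, ampl2_single, map_add, map_smul, lift1_single, lift2_single, smul_add, smul_smul, hTd, hTlt j i hij, hTgt i j hij]
      module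
    · -- k < j < i
      have hik : k < i := hjk.trans hij
      simp only [ampl1_single, ampl2_single, map_add, map_smul, lift1_single, lift2_single, smul_add, smul_smul, hTd, hTlt j i hij, hTgt i j hij, hTlt k j hjk, hTgt j k hjk, hTlt k i hik, hTgt i k hik]
      module
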